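/- Let M be a matroid on a finite linearly ordered ground set E and let (F'_ε, …, F'_0, F_c, F_0, …, F_ι) be a connected filtration of M. Then: for every 0 ≤ k ≤ ι, the subset F_k is a flat of M; for every 0 ≤ k ≤ ε, the subset F'_k is a dual-flat of M; and the subset F_c = F_0 = F'_0 is a cyclic flat of M. -/

import Mathlib

open Matroid Set

namespace ActiveBij

variable {α : Type*}

/-- Deletion of a set of elements from a matroid. -/
def del (M : Matroid α) (D : Set α) : Matroid α := M ↾ (M.E \ D)

/-- Contraction of a set of elements of a matroid. -/
def con (M : Matroid α) (C : Set α) : Matroid α := (del M✶ C)✶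

/-- The minor `M(G)/F` : restriction to `G` followed by contraction of `F`. -/
def minor (M : Matroid α) (G F : Set α) : Matroid α := con (M ↾ G) F

/-- A circuit of a matroid : a minimal dependent set. -/
def Cct (M : Matroid α) (C : Set α) : Prop := Minimal M.Dep C

/-- A cocircuit of a matroid : a circuit of the dual. -/
def Cocct (M : Matroid α) (C : Set α) : Prop := Cct M✶ C

/-- The fundamental circuit of `e ∉ B` with respect to a base `B` :
the unique circuit contained in `B ∪ {e}`. -/
def fundCct (M : Matroid α) (B : Set α) (e : α) : Set α :=
  ⋂₀ {C | Cct M C ∧ C ⊆ insert e B}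

/-- The fundamental cocircuit of `b ∈ B` with respect to a base `B` :
the unique cocircuit contained in `(E \ B) ∪ {b}`. -/
def fundCocct (M : Matroid α) (B : Set α) (b : α) : Set α :=
  ⋂₀ {C | Cocct M C ∧ C ⊆ insert b (M.E \ B)}

/-- The set of internally active elements of a base `B` :
elements `b ∈ B` that are the minimum of their fundamental cocircuit. -/
def ActInt [LinearOrder α] (M : Matroid α) (B : Set α) : Set α :=
  {b ∈ B | IsLeast (fundCocct M B b) b}

/-- The set of externally active elements of a base `B` :
elements `e ∈ M.E \ B` that are the minimum of their fundamental circuit. -/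
def ActExt [LinearOrder α] (M : Matroid α) (B : Set α) : Set α :=
  {e ∈ M.E \ B | IsLeast (fundCct M B e) e}

/-- A uniactive internal base : internal activity `1` and external activity `0`. -/
def UIntBase [LinearOrder α] (M : Matroid α) (B : Set α) : Prop :=
  M.IsBase B ∧ (ActInt M B).ncard = 1 ∧ (ActExt M B).ncard = 0

/-- A uniactive external base : internal activity `0` and external activity `1`. -/
def UExtBase [LinearOrder α] (M : Matroid α) (B : Set α) : Prop :=
  M.IsBase B ∧ (ActInt M B).ncard = 0 ∧ (ActExt M B).ncard = 1

/-- `β(M)` : the number of uniactive internal bases. -/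
noncomputable def beta [LinearOrder α] (M : Matroid α) : ℕ :=
  {B : Set α | UIntBase M B}.ncard

/-- `β*(M)` : the number of uniactive external bases. -/
noncomputable def betaStar [LinearOrder α] (M : Matroid α) : ℕ :=
  {B : Set α | UExtBase M B}.ncard

/-- A connected matroid : any two elements of the ground set lie on a common circuit. -/
def Conn (M : Matroid α) : Prop :=
  M.E.Nonempty ∧ ∀ ⦃x y⦄, x ∈ M.E → y ∈ M.E →
    (x = y ∨ ∃ C, Cct M C ∧ x ∈ C ∧ y ∈ C)

/-- A matroid consisting of a single loop. -/
def IsLoopMatroid (M : Matroid α) : Prop := ∃ e, M.E = {e} ∧ M.Dep {e}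

/-- A matroid consisting of a single coloop (isthmus). -/
def IsColoopMatroid (M : Matroid α) : Prop := ∃ e, M.E = {e} ∧ M.Indep {e}

/-- A flat : a subset of the ground set whose complement is a union of cocircuits. -/
def IsFlat (M : Matroid α) (F : Set α) : Prop :=
  F ⊆ M.E ∧ ∃ S : Set (Set α), (∀ C ∈ S, Cocct M C) ∧ M.E \ F = ⋃₀ S

/-- A dual-flat : a union of circuits. -/
def IsDualFlat (M : Matroid α) (F : Set α) : Prop :=
  ∃ S : Set (Set α), (∀ C ∈ S, Cct M C) ∧ F = ⋃₀ S

/-- A cyclic flat : both a flat and a dual-flat. -/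
def IsCyclicFlat (M : Matroid α) (F : Set α) : Prop :=
  IsFlat M F ∧ IsDualFlat M F

/-- The data of a filtration : `∅ = F'_ε ⊂ ⋯ ⊂ F'_0 = F_c = F_0 ⊂ ⋯ ⊂ F_ι = E`. -/
structure Filtration (α : Type*) where
  ι : ℕ
  ε : ℕ
  F : Fin (ι + 1) → Set α
  F' : Fin (ε + 1) → Set α

/-- The `k`-th internal minor `M(F_k)/F_{k-1}` induced by a filtration. -/
def intMinor (M : Matroid α) (f : Filtration α) (k : Fin f.ι) : Matroid α :=
  minor M (f.F k.succ) (f.F k.castSucc)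

/-- The `k`-th external minor `M(F'_{k-1})/F'_k` induced by a filtration. -/
def extMinor (M : Matroid α) (f : Filtration α) (k : Fin f.ε) : Matroid α :=
  minor M (f.F' k.castSucc) (f.F' k.succ)

/-- The filtration property : strictly nested subsets from `∅` to `M.E` through `F_c`,
with the minima of the successive differences increasing on each side of `F_c`. -/
def IsFiltration [LinearOrder α] (M : Matroid α) (f : Filtration α) : Prop :=
  f.F' (Fin.last f.ε) = ∅ ∧
  f.F' 0 = f.F 0 ∧
  f.F (Fin.last f.ι) = M.E ∧
  (∀ k : Fin f.ι, f.F k.castSucc ⊂ f.F k.succ) ∧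
  (∀ k : Fin f.ε, f.F' k.succ ⊂ f.F' k.castSucc) ∧
  (∀ j k : Fin f.ι, j < k → ∀ a b : α,
    IsLeast (f.F j.succ \ f.F j.castSucc) a →
    IsLeast (f.F k.succ \ f.F k.castSucc) b → a < b) ∧
  (∀ j k : Fin f.ε, j < k → ∀ a b : α,
    IsLeast (f.F' j.castSucc \ f.F' j.succ) a →
    IsLeast (f.F' k.castSucc \ f.F' k.succ) b → a < b)

/-- A connected filtration : a filtration all of whose induced internal minors are
connected and not single loops, and all of whose induced external minors are connected
and not single coloops. -/
def IsConnFiltration [LinearOrder α] (M : Matroid α) (f : Filtration α) : Prop :=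
  IsFiltration M f ∧
  (∀ k : Fin f.ι, Conn (intMinor M f k) ∧ ¬ IsLoopMatroid (intMinor M f k)) ∧
  (∀ k : Fin f.ε, Conn (extMinor M f k) ∧ ¬ IsColoopMatroid (extMinor M f k))

/-- An active filtration of a base `B` : a filtration such that `B` induces a uniactive
internal base of each internal minor and a uniactive external base of each external minor. -/
def IsActiveFiltration [LinearOrder α] (M : Matroid α) (B : Set α) (f : Filtration α) : Prop :=
  IsFiltration M f ∧
  (∀ k : Fin f.ι, UIntBase (intMinor M f k) (B ∩ (f.F k.succ \ f.F k.castSucc))) ∧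
  (∀ k : Fin f.ε, UExtBase (extMinor M f k) (B ∩ (f.F' k.castSucc \ f.F' k.succ)))

/-- The subset `F(X)` attached to a base `B` and a set `X` of internally active elements :
`B ∩ F` is a base of `M(F)`, the activities of the induced bases of `M(F)` and `M/F`
split those of `B`, with `Int` of the contraction part equal to `X`. -/
def DecompSet [LinearOrder α] (M : Matroid α) (B X F : Set α) : Prop :=
  F ⊆ M.E ∧
  (M ↾ F).IsBase (B ∩ F) ∧
  ActInt (M ↾ F) (B ∩ F) = ActInt M B \ X ∧
  ActExt (M ↾ F) (B ∩ F) = ActExt M B ∧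
  ActInt (con M F) (B \ F) = X ∧
  ActExt (con M F) (B \ F) = ∅

/-- The dual of a filtration : complement every subset and exchange the two sides. -/
def dualFil (M : Matroid α) (f : Filtration α) : Filtration α :=
  ⟨f.ε, f.ι, fun k => M.E \ f.F' k, fun k => M.E \ f.F k⟩

/-- The set of subsets occurring in a filtration. -/
def termsOf (f : Filtration α) : Set (Set α) :=
  {H | ∃ k, f.F k = H} ∪ {H | ∃ k, f.F' k = H}

end ActiveBij

namespace ActiveBij

section Aux

variable {α : Type*} {M N : Matroid α}

lemma con_ground (N : Matroid α) (F : Set α) : (con N F).E = N.E \ F := rfl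

lemma cct_restrict_iff {G C : Set α} (hG : G ⊆ M.E) :
    Cct (M ↾ G) C ↔ Cct M C ∧ C ⊆ G := by
  constructor
  · intro h
    have hCG : C ⊆ G := (Matroid.restrict_dep_iff.1 h.1).2
    refine ⟨⟨⟨(Matroid.restrict_dep_iff.1 h.1).1, hCG.trans hG⟩, ?_⟩, hCG⟩
    intro Y hY hYC
    exact h.2 (Matroid.restrict_dep_iff.2 ⟨hY.1, hYC.trans hCG⟩) hYC
  · rintro ⟨h, hCG⟩
    refine ⟨Matroid.restrict_dep_iff.2 ⟨h.1.1, hCG⟩, ?_⟩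
    intro Y hY hYC
    exact h.2 ⟨(Matroid.restrict_dep_iff.1 hY).1, (hYC.trans hCG).trans hG⟩ hYC

private lemma exists_cct_aux (M : Matroid α) :
    ∀ n (D : Set α), D.Finite → D.ncard ≤ n → M.Dep D → ∃ C, Cct M C ∧ C ⊆ D := by
  intro n
  induction n with
  | zero =>
    intro D hfin hcard hD
    have h0 : D.ncard = 0 := Nat.le_zero.1 hcard
    have : D = ∅ := (Set.ncard_eq_zero hfin).1 h0
    obtain ⟨x, hx⟩ := hD.nonempty
    simp [this] at hx
  | succ n ih =>
    intro D hfin hcard hD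
    by_cases h : ∀ Y, M.Dep Y → Y ⊆ D → D ⊆ Y
    · exact ⟨D, ⟨hD, fun Y hY hle => h Y hY hle⟩, Set.Subset.rfl⟩
    · push_neg at h
      obtain ⟨Y, hYdep, hYD, hDY⟩ := h
      have hss : Y ⊂ D := ssubset_iff_subset_not_subset.2 ⟨hYD, hDY⟩
      have hlt : Y.ncard < D.ncard := Set.ncard_lt_ncard hss hfin
      obtain ⟨C, hC, hCY⟩ := ih Y (hfin.subset hYD) (by omega) hYdep
      exact ⟨C, hC, hCY.trans hYD⟩

lemma exists_cct_of_dep {D : Set α} (hfin : D.Finite) (hD : M.Dep D) :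
    ∃ C, Cct M C ∧ C ⊆ D :=
  exists_cct_aux M D.ncard D hfin le_rfl hD

/-- Independence in a contraction, characterised via bases of the big matroid. -/
lemma con_indep_iff {F X : Set α} (hF : F ⊆ N.E) :
    (con N F).Indep X ↔
      X ⊆ N.E \ F ∧ ∃ B, N.IsBase B ∧ N.IsBasis (B ∩ F) F ∧ X ⊆ B := by
  have hEF : N✶.E \ F ⊆ N✶.E := Set.diff_subset
  rw [con, Matroid.dual_indep_iff_exists']
  have hQE : (del N✶ F).E = N.E \ F := rfl
  constructor
  · rintro ⟨hXE, D, hD, hdisj⟩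
    rw [hQE] at hXE
    have hD' : N✶.IsBasis D (N✶.E \ F) := by
      rw [del] at hD
      exact (Matroid.isBase_restrict_iff hEF).1 hD
    obtain ⟨Bs, hBs, hDBs⟩ := hD'.indep.exists_isBase_superset
    have hBsE : Bs ⊆ N.E := hBs.subset_ground
    have hB : N.IsBase (N.E \ Bs) := hBs.compl_isBase_of_dual
    have hDeq : D = Bs ∩ (N✶.E \ F) := by
      refine hD'.eq_of_subset_indep (hBs.indep.subset Set.inter_subset_left)
        (Set.subset_inter hDBs hD'.subset) Set.inter_subset_right
    have hcompl : N.E \ (N.E \ Bs) = Bs := Set.diff_diff_cancel_left hBsE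
    have hD'' : N✶.IsBasis ((N.E \ (N.E \ Bs)) ∩ (N.E \ F)) (N.E \ F) := by
      rw [hcompl]
      rw [hDeq] at hD'
      exact hD'
    have hbasis : N.IsBasis ((N.E \ Bs) ∩ F) F :=
      (hB.inter_isBasis_iff_compl_inter_isBasis_dual hF).2 hD''
    refine ⟨hXE, N.E \ Bs, hB, hbasis, ?_⟩
    intro x hx
    by_contra hxB
    have hxE : x ∈ N.E \ F := hXE hx
    have hxBs : x ∈ Bs := by
      by_contra hxBs
      exact hxB ⟨hxE.1, hxBs⟩
    exact (Set.disjoint_left.1 hdisj hx) (by rw [hDeq]; exact ⟨hxBs, hxE⟩)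
  · rintro ⟨hX, B, hB, hbasis, hXB⟩
    have hD : N✶.IsBasis ((N.E \ B) ∩ (N.E \ F)) (N.E \ F) :=
      (hB.inter_isBasis_iff_compl_inter_isBasis_dual hF).1 hbasis
    refine ⟨by rw [hQE]; exact hX, (N.E \ B) ∩ (N.E \ F), ?_, ?_⟩
    · rw [del]
      exact (Matroid.isBase_restrict_iff hEF).2 hD
    · rw [Set.disjoint_left]
      intro x hx hxD
      exact hxD.1.2 (hXB hx)

lemma con_nonloop_not_mem_closure {F : Set α} {e : α} (hF : F ⊆ N.E)
    (hi : (con N F).Indep {e}) : e ∉ N.closure F := by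
  obtain ⟨hXE, B, hB, hbasis, heB⟩ := (con_indep_iff hF).1 hi
  have heF : e ∉ F := (hXE (Set.mem_singleton e)).2
  have h1 : N.closure F = N.closure (B ∩ F) := hbasis.closure_eq_closure.symm
  intro he
  have hsub : B ∩ F ⊆ B \ {e} := fun x hx =>
    ⟨hx.1, fun hxe => heF (by rw [← Set.mem_singleton_iff.1 hxe]; exact hx.2)⟩
  have : e ∈ N.closure (B \ {e}) :=
    Matroid.closure_subset_closure N hsub (by rw [h1] at he; exact he)
  exact hB.indep.notMem_closure_diff_of_mem (heB (Set.mem_singleton e)) this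

lemma mem_closure_restrict {F G : Set α} {e : α} (hFG : F ⊆ G) (hG : G ⊆ M.E)
    (heG : e ∈ G) (heF : e ∉ F) (he : e ∈ M.closure F) : e ∈ (M ↾ G).closure F := by
  obtain ⟨I, hI⟩ := M.exists_isBasis F (hFG.trans hG)
  have heI : e ∉ I := fun h => heF (hI.subset h)
  have heclI : e ∈ M.closure I := by rw [hI.closure_eq_closure]; exact he
  have hdep : M.Dep (insert e I) := (hI.indep.mem_closure_iff_of_notMem heI).1 heclI
  have hIr : (M ↾ G).Indep I := Matroid.restrict_indep_iff.2 ⟨hI.indep, hI.subset.trans hFG⟩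
  have hdepr : (M ↾ G).Dep (insert e I) :=
    Matroid.restrict_dep_iff.2 ⟨hdep.1, Set.insert_subset heG (hI.subset.trans hFG)⟩
  have hm : e ∈ (M ↾ G).closure I := (hIr.mem_closure_iff_of_notMem heI).2 hdepr
  exact Matroid.closure_subset_closure _ hI.subset hm

lemma exists_cocct {e : α} {F : Set α} (he : e ∈ M.E) (hF : F ⊆ M.E)
    (hecl : e ∉ M.closure F) : ∃ C, Cocct M C ∧ e ∈ C ∧ C ⊆ M.E \ F := by
  obtain ⟨I, hI⟩ := M.exists_isBasis F hF
  have heI : e ∉ I := fun h => hecl (M.subset_closure F hF (hI.subset h))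
  have heclI : e ∉ M.closure I := by rw [hI.closure_eq_closure]; exact hecl
  have hins : M.Indep (insert e I) := ((hI.indep.notMem_closure_iff he).1 heclI).1
  obtain ⟨B, hB, hIB⟩ := hins.exists_isBase_superset
  have heB : e ∈ B := hIB (Set.mem_insert e I)
  have hIB' : I ⊆ B \ {e} := fun x hx =>
    ⟨hIB (Set.mem_insert_of_mem _ hx), fun hxe => heI (by rwa [Set.mem_singleton_iff.1 hxe] at hx)⟩
  have hBe : B \ {e} ⊆ M.E := Set.diff_subset.trans hB.subset_ground
  have heH : e ∉ M.closure (B \ {e}) := hB.indep.notMem_closure_diff_of_mem heB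
  have hFH : F ⊆ M.closure (B \ {e}) := by
    have h1 : F ⊆ M.closure F := M.subset_closure F hF
    have h2 : M.closure F = M.closure I := hI.closure_eq_closure.symm
    have h3 : M.closure I ⊆ M.closure (B \ {e}) := Matroid.closure_subset_closure M hIB'
    exact fun x hx => h3 (h2 ▸ h1 hx)
  refine ⟨M.E \ M.closure (B \ {e}), ⟨?_, ?_⟩, ⟨he, heH⟩, Set.diff_subset_diff_right hFH⟩
  · -- M✶.Dep (M.E \ H)
    refine ⟨?_, Set.diff_subset⟩
    intro hind
    obtain ⟨B', hB', hdisj⟩ :=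
      (Matroid.dual_indep_iff_exists (M := M) Set.diff_subset).1 hind
    have hB'H : B' ⊆ M.closure (B \ {e}) := by
      intro x hx
      by_contra hxH
      exact (Set.disjoint_left.1 hdisj ⟨hB'.subset_ground hx, hxH⟩) hx
    have hground : M.E ⊆ M.closure (B \ {e}) := by
      rw [← hB'.closure_eq]
      have := Matroid.closure_subset_closure M hB'H
      rwa [Matroid.closure_closure] at this
    exact heH (hground he)
  · -- minimality
    intro Y hY hYC
    by_contra hnsub
    obtain ⟨x, hxC, hxY⟩ := Set.not_subset.1 hnsub
    have hYE : Y ⊆ M.E := hYC.trans Set.diff_subset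
    have hYindep : M✶.Indep Y := by
      rw [Matroid.dual_indep_iff_exists hYE]
      by_cases hxe : x = e
      · refine ⟨B, hB, Set.disjoint_left.2 ?_⟩
        intro y hyY hyB
        by_cases hye : y = e
        · exact hxY (by rwa [hxe, ← hye])
        · exact (hYC hyY).2 (M.subset_closure (B \ {e}) hBe ⟨hyB, hye⟩)
      · have hxB : x ∉ B := fun hxB =>
          hxC.2 (M.subset_closure (B \ {e}) hBe ⟨hxB, hxe⟩)
        have hd : M.Indep (B \ {e}) := hB.indep.subset Set.diff_subset
        have hxind : M.Indep (insert x (B \ {e})) :=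
          ((hd.notMem_closure_iff hxC.1).1 hxC.2).1
        have hB2 : M.IsBase (insert x (B \ {e})) := hB.exchange_isBase_of_indep hxB hxind
        refine ⟨_, hB2, Set.disjoint_left.2 ?_⟩
        intro y hyY hyB
        rcases hyB with hyx | hyB
        · exact hxY (by rwa [← hyx])
        · exact (hYC hyY).2 (M.subset_closure (B \ {e}) hBe hyB)
    exact hY.1 hYindep

lemma conn_not_dep_singleton {P : Matroid α} (hP : Conn P) (hL : ¬ IsLoopMatroid P)
    {e : α} (he : e ∈ P.E) : ¬ P.Dep {e} := by
  intro hdep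
  by_cases hE : ∃ f ∈ P.E, f ≠ e
  · obtain ⟨g, hg, hge⟩ := hE
    rcases hP.2 he hg with h | ⟨C, hC, heC, hgC⟩
    · exact hge h.symm
    · have hCe : C ⊆ {e} := hC.2 hdep (Set.singleton_subset_iff.2 heC)
      exact hge (hCe hgC)
  · push_neg at hE
    exact hL ⟨e, Set.Subset.antisymm (fun x hx => hE x hx) (Set.singleton_subset_iff.2 he), hdep⟩

lemma conn_exists_cct {P : Matroid α} (hP : Conn P) (hL : ¬ IsColoopMatroid P)
    {e : α} (he : e ∈ P.E) : ∃ C, Cct P C ∧ e ∈ C := by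
  by_cases hE : ∃ f ∈ P.E, f ≠ e
  · obtain ⟨g, hg, hge⟩ := hE
    rcases hP.2 he hg with h | ⟨C, hC, heC, _⟩
    · exact absurd h.symm hge
    · exact ⟨C, hC, heC⟩
  · push_neg at hE
    have hground : P.E = {e} :=
      Set.Subset.antisymm (fun x hx => hE x hx) (Set.singleton_subset_iff.2 he)
    have hdep : P.Dep {e} :=
      ⟨fun hind => hL ⟨e, hground, hind⟩, by rw [hground]⟩
    refine ⟨{e}, ⟨hdep, ?_⟩, rfl⟩
    intro Y hY hYe
    obtain ⟨y, hy⟩ := hY.nonempty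
    have hye : y = e := hYe hy
    intro x hx
    rw [Set.mem_singleton_iff.1 hx, ← hye]
    exact hy

lemma lift_cct {F C' : Set α} (hNfin : N.E.Finite) (hF : F ⊆ N.E) {e : α}
    (hC' : Cct (con N F) C') (heC' : e ∈ C') : ∃ C, Cct N C ∧ e ∈ C := by
  have hC'E : C' ⊆ N.E \ F := by
    have := hC'.1.2
    rwa [con_ground] at this
  have hindep : (con N F).Indep (C' \ {e}) := by
    have hnd : ¬ (con N F).Dep (C' \ {e}) := fun hd =>
      ((hC'.2 hd Set.diff_subset) heC').2 rfl
    have hsub : C' \ {e} ⊆ (con N F).E := by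
      rw [con_ground]; exact Set.diff_subset.trans hC'E
    exact (Matroid.not_dep_iff hsub).1 hnd
  obtain ⟨hXE, B, hB, hbasis, hCB⟩ := (con_indep_iff hF).1 hindep
  have hJB : B ∩ F ⊆ B := Set.inter_subset_left
  have hnotind : ¬ N.Indep (C' ∪ (B ∩ F)) := by
    intro hind
    obtain ⟨B₂, hB₂, hsub₂⟩ := hind.exists_isBase_superset
    have hJ₂ : B₂ ∩ F = B ∩ F := by
      refine (hbasis.eq_of_subset_indep (hB₂.indep.subset Set.inter_subset_left)
        (Set.subset_inter (Set.subset_union_right.trans hsub₂) Set.inter_subset_right)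
        Set.inter_subset_right).symm
    have hci : (con N F).Indep C' := (con_indep_iff hF).2
      ⟨hC'E, B₂, hB₂, by rw [hJ₂]; exact hbasis, Set.subset_union_left.trans hsub₂⟩
    exact hC'.1.1 hci
  have hdep : N.Dep (C' ∪ (B ∩ F)) :=
    ⟨hnotind, Set.union_subset (hC'E.trans Set.diff_subset) (hJB.trans hB.subset_ground)⟩
  obtain ⟨C, hC, hCsub⟩ := exists_cct_of_dep (hNfin.subset hdep.2) hdep
  refine ⟨C, hC, ?_⟩
  by_contra heC
  have hCB' : C ⊆ B := by
    intro x hx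
    rcases hCsub hx with hx' | hx'
    · exact hCB ⟨hx', fun h => heC (by rwa [Set.mem_singleton_iff.1 h] at hx)⟩
    · exact hJB hx'
  exact hC.1.1 (hB.indep.subset hCB')

end Aux

section Fil

variable {α : Type*} [LinearOrder α] {M : Matroid α} {f : Filtration α}

lemma IsFiltration.F_mono (hf : IsFiltration M f) {a b : Fin (f.ι + 1)} (hab : a ≤ b) :
    f.F a ⊆ f.F b := by
  have hstep : ∀ (n : ℕ) (h : n < f.ι), f.F ⟨n, by omega⟩ ⊆ f.F ⟨n + 1, by omega⟩ := by
    intro n h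
    exact (hf.2.2.2.1 ⟨n, h⟩).subset
  have key : ∀ m n (hm : m < f.ι + 1) (hn : n < f.ι + 1), n ≤ m →
      f.F ⟨n, hn⟩ ⊆ f.F ⟨m, hm⟩ := by
    intro m
    induction m with
    | zero =>
      intro n _ hn hnm
      have : n = 0 := by omega
      subst this
      exact Set.Subset.rfl
    | succ m ih =>
      intro n hm hn hnm
      rcases Nat.lt_or_ge n (m + 1) with h | h
      · exact (ih n (by omega) hn (by omega)).trans (hstep m (by omega))
      · have : n = m + 1 := by omega
        subst this
        exact Set.Subset.rfl
  have := key b.1 a.1 b.2 a.2 hab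
  rwa [Fin.eta, Fin.eta] at this

lemma IsFiltration.F'_anti (hf : IsFiltration M f) {a b : Fin (f.ε + 1)} (hab : a ≤ b) :
    f.F' b ⊆ f.F' a := by
  have hstep : ∀ (n : ℕ) (h : n < f.ε), f.F' ⟨n + 1, by omega⟩ ⊆ f.F' ⟨n, by omega⟩ := by
    intro n h
    exact (hf.2.2.2.2.1 ⟨n, h⟩).subset
  have key : ∀ m n (hm : m < f.ε + 1) (hn : n < f.ε + 1), n ≤ m →
      f.F' ⟨m, hm⟩ ⊆ f.F' ⟨n, hn⟩ := by
    intro m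
    induction m with
    | zero =>
      intro n _ hn hnm
      have : n = 0 := by omega
      subst this
      exact Set.Subset.rfl
    | succ m ih =>
      intro n hm hn hnm
      rcases Nat.lt_or_ge n (m + 1) with h | h
      · exact (hstep m (by omega)).trans (ih n (by omega) hn (by omega))
      · have : n = m + 1 := by omega
        subst this
        exact Set.Subset.rfl
  have := key b.1 a.1 b.2 a.2 hab
  rwa [Fin.eta, Fin.eta] at this

lemma IsFiltration.exists_step (hf : IsFiltration M f) {k : Fin (f.ι + 1)} {e : α}
    (he : e ∈ M.E) (hek : e ∉ f.F k) :
    ∃ j : Fin f.ι, (k : ℕ) ≤ (j : ℕ) ∧ e ∈ f.F j.succ ∧ e ∉ f.F j.castSucc := by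
  have aux : ∀ m (hm : m < f.ι + 1), (k : ℕ) < m → e ∈ f.F ⟨m, hm⟩ →
      ∃ j : Fin f.ι, (k : ℕ) ≤ (j : ℕ) ∧ e ∈ f.F j.succ ∧ e ∉ f.F j.castSucc := by
    intro m
    induction m with
    | zero => omega
    | succ m ih =>
      intro hm hkm hem
      by_cases hem' : e ∈ f.F ⟨m, by omega⟩
      · rcases Nat.lt_or_ge (k : ℕ) m with h | h
        · exact ih (by omega) h hem'
        · have hk : (⟨m, by omega⟩ : Fin (f.ι + 1)) = k := Fin.ext (by simp; omega)
          rw [hk] at hem'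
          exact absurd hem' hek
      · refine ⟨⟨m, by omega⟩, by simp; omega, ?_, ?_⟩
        · have hs : (⟨m, by omega⟩ : Fin f.ι).succ = ⟨m + 1, hm⟩ := rfl
          rwa [hs]
        · have hc : (⟨m, by omega⟩ : Fin f.ι).castSucc = ⟨m, by omega⟩ := rfl
          rwa [hc]
  have hklt : (k : ℕ) < f.ι := by
    rcases Nat.lt_or_ge (k : ℕ) f.ι with h | h
    · exact h
    · exfalso
      have hk : k = Fin.last f.ι := Fin.ext (by simp; omega)
      rw [hk, hf.2.2.1] at hek
      exact hek he
  have hlast : e ∈ f.F ⟨f.ι, by omega⟩ := by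
    have : (⟨f.ι, by omega⟩ : Fin (f.ι + 1)) = Fin.last f.ι := rfl
    rw [this, hf.2.2.1]
    exact he
  exact aux f.ι (by omega) hklt hlast

lemma IsFiltration.exists_step' (hf : IsFiltration M f) {k : Fin (f.ε + 1)} {e : α}
    (hek : e ∈ f.F' k) :
    ∃ j : Fin f.ε, (k : ℕ) ≤ (j : ℕ) ∧ e ∈ f.F' j.castSucc ∧ e ∉ f.F' j.succ := by
  have aux : ∀ m (hm : m < f.ε + 1), (k : ℕ) < m → e ∉ f.F' ⟨m, hm⟩ →
      ∃ j : Fin f.ε, (k : ℕ) ≤ (j : ℕ) ∧ e ∈ f.F' j.castSucc ∧ e ∉ f.F' j.succ := by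
    intro m
    induction m with
    | zero => omega
    | succ m ih =>
      intro hm hkm hem
      by_cases hem' : e ∈ f.F' ⟨m, by omega⟩
      · refine ⟨⟨m, by omega⟩, by simp; omega, ?_, ?_⟩
        · have hc : (⟨m, by omega⟩ : Fin f.ε).castSucc = ⟨m, by omega⟩ := rfl
          rwa [hc]
        · have hs : (⟨m, by omega⟩ : Fin f.ε).succ = ⟨m + 1, hm⟩ := rfl
          rwa [hs]
      · rcases Nat.lt_or_ge (k : ℕ) m with h | h
        · exact ih (by omega) h hem'
        · exfalso
          have hk : (⟨m, by omega⟩ : Fin (f.ε + 1)) = k := Fin.ext (by simp; omega)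
          rw [hk] at hem'
          exact hem' hek
  have hklt : (k : ℕ) < f.ε := by
    rcases Nat.lt_or_ge (k : ℕ) f.ε with h | h
    · exact h
    · exfalso
      have hk : k = Fin.last f.ε := Fin.ext (by simp; omega)
      rw [hk, hf.1] at hek
      exact hek
  have hlast : e ∉ f.F' ⟨f.ε, by omega⟩ := by
    have : (⟨f.ε, by omega⟩ : Fin (f.ε + 1)) = Fin.last f.ε := rfl
    rw [this, hf.1]
    exact fun h => h
  exact aux f.ε (by omega) hklt hlast

end Fil

/-- In a connected filtration, every `F_k` is a flat, every `F'_k` is a dual-flat, and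
the middle subset `F_c` is a cyclic flat. -/
theorem stmt7 {α : Type*} [LinearOrder α] (M : Matroid α) [M.Finite]
    (f : Filtration α) (hf : IsConnFiltration M f) :
    (∀ k : Fin (f.ι + 1), IsFlat M (f.F k)) ∧
    (∀ k : Fin (f.ε + 1), IsDualFlat M (f.F' k)) ∧
    IsCyclicFlat M (f.F 0) := by
  obtain ⟨hfil, hint, hext⟩ := hf
  have hME : M.E.Finite := M.ground_finite
  have flat : ∀ k : Fin (f.ι + 1), IsFlat M (f.F k) := by
    intro k
    have hkE : f.F k ⊆ M.E := by
      rw [← hfil.2.2.1]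
      exact hfil.F_mono (Fin.le_last k)
    refine ⟨hkE, {C | Cocct M C ∧ C ⊆ M.E \ f.F k}, fun C hC => hC.1, ?_⟩
    apply Set.Subset.antisymm
    · intro e he
      obtain ⟨j, hkj, hej, hej'⟩ := hfil.exists_step he.1 he.2
      obtain ⟨hconn, hloop⟩ := hint j
      have hFcG : f.F j.castSucc ⊆ f.F j.succ := (hfil.2.2.2.1 j).subset
      have hGE : f.F j.succ ⊆ M.E := by
        rw [← hfil.2.2.1]
        exact hfil.F_mono (Fin.le_last _)
      have hePE : e ∈ (intMinor M f j).E := by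
        rw [intMinor, minor, con_ground, Matroid.restrict_ground_eq]
        exact ⟨hej, hej'⟩
      have hnd : ¬ (intMinor M f j).Dep {e} := conn_not_dep_singleton hconn hloop hePE
      have hind : (intMinor M f j).Indep {e} :=
        (Matroid.not_dep_iff (Set.singleton_subset_iff.2 hePE)).1 hnd
      have hind' : (con (M ↾ f.F j.succ) (f.F j.castSucc)).Indep {e} := hind
      have hFcG' : f.F j.castSucc ⊆ (M ↾ f.F j.succ).E := by
        rw [Matroid.restrict_ground_eq]
        exact hFcG
      have hne : e ∉ (M ↾ f.F j.succ).closure (f.F j.castSucc) :=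
        con_nonloop_not_mem_closure hFcG' hind'
      have hneM : e ∉ M.closure (f.F j.castSucc) := fun h =>
        hne (mem_closure_restrict hFcG hGE hej hej' h)
      have hkj' : f.F k ⊆ f.F j.castSucc := hfil.F_mono (by
        rw [Fin.le_def]
        simpa using hkj)
      have hne2 : e ∉ M.closure (f.F k) := fun h =>
        hneM (Matroid.closure_subset_closure M hkj' h)
      obtain ⟨C, hC, heC, hCsub⟩ := exists_cocct he.1 hkE hne2
      exact Set.mem_sUnion.2 ⟨C, ⟨hC, hCsub⟩, heC⟩
    · rintro x ⟨C, ⟨_, hC2⟩, hxC⟩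
      exact hC2 hxC
  have hF'0E : f.F' 0 ⊆ M.E := by
    rw [hfil.2.1, ← hfil.2.2.1]
    exact hfil.F_mono (Fin.zero_le _)
  have dualflat : ∀ k : Fin (f.ε + 1), IsDualFlat M (f.F' k) := by
    intro k
    refine ⟨{C | Cct M C ∧ C ⊆ f.F' k}, fun C hC => hC.1, ?_⟩
    apply Set.Subset.antisymm
    · intro e he
      obtain ⟨j, hkj, hej, hej'⟩ := hfil.exists_step' he
      obtain ⟨hconn, hcol⟩ := hext j
      have hF21 : f.F' j.succ ⊆ f.F' j.castSucc := (hfil.2.2.2.2.1 j).subset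
      have hF1E : f.F' j.castSucc ⊆ M.E :=
        (hfil.F'_anti (Fin.zero_le _)).trans hF'0E
      have hePE : e ∈ (extMinor M f j).E := by
        rw [extMinor, minor, con_ground, Matroid.restrict_ground_eq]
        exact ⟨hej, hej'⟩
      obtain ⟨C', hC', heC'⟩ := conn_exists_cct hconn hcol hePE
      have hC'' : Cct (con (M ↾ f.F' j.castSucc) (f.F' j.succ)) C' := hC'
      have hF2r : f.F' j.succ ⊆ (M ↾ f.F' j.castSucc).E := by
        rw [Matroid.restrict_ground_eq]
        exact hF21
      have hNfin : (M ↾ f.F' j.castSucc).E.Finite := by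
        rw [Matroid.restrict_ground_eq]
        exact hME.subset hF1E
      obtain ⟨C, hC, heC⟩ := lift_cct hNfin hF2r hC'' heC'
      have hCM := (cct_restrict_iff hF1E).1 hC
      have hsub : f.F' j.castSucc ⊆ f.F' k := hfil.F'_anti (by
        rw [Fin.le_def]
        simpa using hkj)
      exact Set.mem_sUnion.2 ⟨C, ⟨hCM.1, hCM.2.trans hsub⟩, heC⟩
    · rintro x ⟨C, ⟨_, hC2⟩, hxC⟩
      exact hC2 hxC
  refine ⟨flat, dualflat, flat 0, ?_⟩
  rw [← hfil.2.1]
  exact dualflat 0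

end ActiveBij
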